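/- Let t ∈ ℂ with t ≠ 1. Then for every 1 ≤ j ≤ N: ∏_{k=1, k≠j}^{N} (t·ω^j − ω^k)/(ω^j − ω^k) = (t^N − 1)/(N·(t − 1)); in particular this product is independent of j. -/

import Mathlib

open scoped BigOperators

noncomputable section

namespace Stmt18

/-- The primitive `N`-th root of unity `ω = exp(2πi/N)`. -/
def omega (N : ℕ) : ℂ := Complex.exp (2 * (Real.pi : ℂ) * Complex.I / (N : ℂ))

open Polynomial in
lemma key (N : ℕ) (hN : 0 < N) (t : ℂ) (ht : t ≠ 1) (μ : ℂ)
    (hμ : μ ∈ Polynomial.nthRootsFinset N (1 : ℂ)) :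
    ∏ ζ ∈ (Polynomial.nthRootsFinset N (1 : ℂ)).erase μ, ((t * μ - ζ) / (μ - ζ))
      = (t ^ N - 1) / ((N : ℂ) * (t - 1)) := by
  classical
  have hω : IsPrimitiveRoot (omega N) N := Complex.isPrimitiveRoot_exp N hN.ne'
  have hμN : μ ^ N = 1 := (Polynomial.mem_nthRootsFinset hN 1).1 hμ
  have hμ0 : μ ≠ 0 := by
    intro h; rw [h, zero_pow hN.ne'] at hμN; exact zero_ne_one hμN
  have ht1 : t - 1 ≠ 0 := sub_ne_zero.mpr ht
  have hNz : (N : ℂ) ≠ 0 := Nat.cast_ne_zero.mpr hN.ne'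
  -- denominator product
  have hden : ∏ ζ ∈ (nthRootsFinset N (1 : ℂ)).erase μ, (μ - ζ) = (N : ℂ) * μ ^ (N - 1) := by
    have hpoly : ∏ ζ ∈ nthRootsFinset N (1 : ℂ), (X - C ζ) = X ^ N - 1 :=
      (X_pow_sub_one_eq_prod hN hω).symm
    have hmem : μ ∈ (nthRootsFinset N (1 : ℂ)).val := hμ
    have := eval_multiset_prod_X_sub_C_derivative (S := (nthRootsFinset N (1 : ℂ)).val) hmem
    have hfin : ∏ ζ ∈ (nthRootsFinset N (1 : ℂ)).erase μ, (μ - ζ)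
        = (Multiset.map (fun a => μ - a) (((nthRootsFinset N (1 : ℂ)).val).erase μ)).prod := rfl
    rw [hfin, ← this]
    have : (Multiset.map (fun a => X - C a) (nthRootsFinset N (1 : ℂ)).val).prod
        = X ^ N - 1 := hpoly
    rw [this]
    simp [derivative_sub, derivative_X_pow]
  -- numerator product
  have hnum : (t * μ - μ) * ∏ ζ ∈ (nthRootsFinset N (1 : ℂ)).erase μ, (t * μ - ζ) = t ^ N - 1 := by
    rw [Finset.mul_prod_erase _ _ hμ]
    have := hω.pow_sub_pow_eq_prod_sub_mul (t * μ) 1 hN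
    simp only [one_pow, mul_one] at this
    rw [← this, mul_pow, hμN, mul_one]
  have hμpow : μ * μ ^ (N - 1) = 1 := by
    rw [← pow_succ', Nat.sub_add_cancel hN, hμN]
  rw [Finset.prod_div_distrib, hden]
  have htμ : t * μ - μ ≠ 0 := by
    intro h
    apply ht1
    have : (t - 1) * μ = 0 := by ring_nf; ring_nf at h; linear_combination h
    rcases mul_eq_zero.1 this with h' | h'
    · exact h'
    · exact absurd h' hμ0
  have hprod : ∏ ζ ∈ (nthRootsFinset N (1 : ℂ)).erase μ, (t * μ - ζ)
      = (t ^ N - 1) / (t * μ - μ) := by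
    rw [eq_div_iff htμ, mul_comm]
    exact hnum
  rw [hprod]
  field_simp
  linear_combination (-(t ^ N - 1)) * hμpow

/-- For `t ≠ 1` and `1 ≤ j ≤ N`:
`∏_{k≠j} (t·ω^j − ω^k)/(ω^j − ω^k) = (t^N − 1)/(N·(t − 1))`; in particular the product is
independent of `j`. -/
theorem evaluated_coefficient (N : ℕ) (hN : 0 < N) (t : ℂ) (ht : t ≠ 1)
    (j : ℕ) (hj : j ∈ Finset.Icc 1 N) :
    ∏ k ∈ (Finset.Icc 1 N).erase j,
        (t * omega N ^ j - omega N ^ k) / (omega N ^ j - omega N ^ k)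
      = (t ^ N - 1) / ((N : ℂ) * (t - 1)) := by
  classical
  haveI : NeZero N := ⟨hN.ne'⟩
  have hω : IsPrimitiveRoot (omega N) N := Complex.isPrimitiveRoot_exp N hN.ne'
  have hpow1 : ∀ a : ℕ, (omega N ^ a) ^ N = 1 := by
    intro a
    rw [← pow_mul, mul_comm, pow_mul, hω.pow_eq_one, one_pow]
  have hinj : ∀ a ∈ Finset.Icc 1 N, ∀ b ∈ Finset.Icc 1 N,
      omega N ^ a = omega N ^ b → a = b := by
    intro a ha b hb hab
    rw [Finset.mem_Icc] at ha hb
    have e : ∀ c : ℕ, omega N ^ (c % N) = omega N ^ c := by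
      intro c
      conv_rhs => rw [← Nat.div_add_mod c N]
      rw [pow_add, pow_mul, hω.pow_eq_one, one_pow, one_mul]
    rw [← e a, ← e b] at hab
    have hmod := hω.pow_inj (Nat.mod_lt a hN) (Nat.mod_lt b hN) hab
    have ea : a % N = if a = N then 0 else a := by
      rcases eq_or_lt_of_le ha.2 with h | h
      · simp [h, Nat.mod_self]
      · simp [Nat.mod_eq_of_lt h, Nat.ne_of_lt h]
    have eb : b % N = if b = N then 0 else b := by
      rcases eq_or_lt_of_le hb.2 with h | h
      · simp [h, Nat.mod_self]
      · simp [Nat.mod_eq_of_lt h, Nat.ne_of_lt h]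
    rw [ea, eb] at hmod
    split_ifs at hmod <;> omega
  have hjmem : omega N ^ j ∈ Polynomial.nthRootsFinset N (1 : ℂ) :=
    (Polynomial.mem_nthRootsFinset hN 1).2 (hpow1 j)
  rw [← key N hN t ht (omega N ^ j) hjmem]
  refine Finset.prod_bij (fun k _ => omega N ^ k) ?_ ?_ ?_ ?_
  · intro a ha
    have ha' := Finset.mem_of_mem_erase ha
    refine Finset.mem_erase.2 ⟨?_, (Polynomial.mem_nthRootsFinset hN 1).2 (hpow1 a)⟩
    intro h
    exact (Finset.ne_of_mem_erase ha) (hinj a ha' j hj h)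
  · intro a ha b hb hab
    exact hinj a (Finset.mem_of_mem_erase ha) b (Finset.mem_of_mem_erase hb) hab
  · intro ζ hζ
    have hζ' := Finset.mem_of_mem_erase hζ
    obtain ⟨i, hi, rfl⟩ := hω.eq_pow_of_pow_eq_one ((Polynomial.mem_nthRootsFinset hN 1).1 hζ')
    refine ⟨if i = 0 then N else i, ?_, ?_⟩
    · have hval : omega N ^ (if i = 0 then N else i) = omega N ^ i := by
        split
        · next h => rw [h, pow_zero, hω.pow_eq_one]
        · rfl
      refine Finset.mem_erase.2 ⟨?_, ?_⟩
      · intro h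
        apply Finset.ne_of_mem_erase hζ
        rw [← hval, h]
      · rw [Finset.mem_Icc]
        split <;> omega
    · show omega N ^ (if i = 0 then N else i) = omega N ^ i
      split
      · next h => rw [h, pow_zero, hω.pow_eq_one]
      · rfl
  · intro a _
    rfl

end Stmt18
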